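/- Let p ≥ 1, let P(y) = y^p + Σ_{0≤h≤p−1} c_h·y^h ∈ ℝ[y] be monic of degree p, let 0 ≤ q ≤ p−1 and let t₁, t₂ ∈ ℝ. Suppose P^{(q)}(t₁) = 0, P^{(q)}(t₂) = 0, and for every k with q+1 ≤ k ≤ p−1, sign(P^{(k)}(t₁)) = sign(P^{(k)}(t₂)) and these common signs are nonzero. Then t₁ = t₂. -/
import Mathlib

open Polynomial Set

/-- A polynomial nonvanishing on an interval has constant sign there. -/
lemma poly_sign_const (f : Polynomial ℝ) (a b : ℝ)
    (h : ∀ t ∈ Icc a b, f.eval t ≠ 0) :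
    (∀ t ∈ Icc a b, 0 < f.eval t) ∨ (∀ t ∈ Icc a b, f.eval t < 0) := by
  by_contra hc
  push_neg at hc
  obtain ⟨⟨s, hs, hs0⟩, ⟨u, hu, hu0⟩⟩ := hc
  have hs0 : f.eval s < 0 := lt_of_le_of_ne hs0 (h s hs)
  have hu0 : 0 < f.eval u := lt_of_le_of_ne hu0 fun e => h u hu e.symm
  have hsub : uIcc s u ⊆ Icc a b := uIcc_subset_Icc hs hu
  have hcont : ContinuousOn (fun x => f.eval x) (uIcc s u) :=
    (f.continuous).continuousOn
  have := intermediate_value_uIcc hcont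
  have h0 : (0 : ℝ) ∈ uIcc (f.eval s) (f.eval u) := by
    rw [Set.mem_uIcc]; left; exact ⟨hs0.le, hu0.le⟩
  obtain ⟨c, hc1, hc2⟩ := this h0
  exact h c (hsub hc1) hc2

lemma poly_strictMonoOn (f : Polynomial ℝ) (a b : ℝ)
    (h : ∀ t ∈ Icc a b, 0 < f.derivative.eval t) :
    StrictMonoOn (fun x => f.eval x) (Icc a b) :=
  strictMonoOn_of_deriv_pos (convex_Icc a b) f.continuous.continuousOn
    (fun x hx => by rw [Polynomial.deriv]; exact h x (interior_subset hx))

lemma poly_strictAntiOn (f : Polynomial ℝ) (a b : ℝ)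
    (h : ∀ t ∈ Icc a b, f.derivative.eval t < 0) :
    StrictAntiOn (fun x => f.eval x) (Icc a b) :=
  strictAntiOn_of_deriv_neg (convex_Icc a b) f.continuous.continuousOn
    (fun x hx => by rw [Polynomial.deriv]; exact h x (interior_subset hx))

theorem aux (p : ℕ) (hp : 1 ≤ p) (P : Polynomial ℝ)
    (hmon : P.Monic) (hdeg : P.natDegree = p)
    (q : ℕ) (hq : q ≤ p - 1) (t₁ t₂ : ℝ) (hle : t₁ ≤ t₂)
    (h₁ : (Polynomial.derivative^[q] P).eval t₁ = 0)
    (h₂ : (Polynomial.derivative^[q] P).eval t₂ = 0)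
    (hsame : ∀ k, q + 1 ≤ k → k ≤ p - 1 →
      SignType.sign ((Polynomial.derivative^[k] P).eval t₁) =
        SignType.sign ((Polynomial.derivative^[k] P).eval t₂) ∧
      SignType.sign ((Polynomial.derivative^[k] P).eval t₁) ≠ 0) :
    t₁ = t₂ := by
  -- key: for q+1 ≤ k ≤ p, the k-th derivative does not vanish on [t₁, t₂]
  have key : ∀ j k, k ≤ p → p - k ≤ j → q + 1 ≤ k →
      ∀ t ∈ Icc t₁ t₂, (derivative^[k] P).eval t ≠ 0 := by
    intro j
    induction j with
    | zero =>
      intro k hkp hj _ t _ 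
      have hk : k = p := le_antisymm hkp (by omega)
      rw [hk]
      have hd0 : (derivative^[p] P).natDegree ≤ 0 := by
        have := Polynomial.natDegree_iterate_derivative P p
        omega
      have heq : derivative^[p] P = C ((derivative^[p] P).coeff 0) :=
        Polynomial.eq_C_of_natDegree_le_zero hd0
      have hc : (derivative^[p] P).coeff 0 = (p.descFactorial p : ℝ) := by
        have hc1 : P.coeff (0 + p) = 1 := by rw [zero_add, ← hdeg]; exact hmon.coeff_natDegree
        rw [Polynomial.coeff_iterate_derivative, hc1]
        simp
      rw [heq, eval_C, hc]
      simp only [Nat.descFactorial_self]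
      exact_mod_cast p.factorial_ne_zero
    | succ n ih =>
      intro k hkp hj hqk t ht
      rcases eq_or_lt_of_le hkp with hk | hk
      · exact ih k hkp (by omega) hqk t ht
      -- k < p, so k ≤ p - 1 and we can use hsame
      have hnz : ∀ s ∈ Icc t₁ t₂, (derivative^[k+1] P).eval s ≠ 0 :=
        ih (k+1) (by omega) (by omega) (by omega)
      have hder : derivative^[k+1] P = derivative (derivative^[k] P) :=
        Function.iterate_succ_apply' _ _ _
      obtain ⟨hsg, hne⟩ := hsame k hqk (by omega)
      have h1ne : (derivative^[k] P).eval t₁ ≠ 0 := by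
        intro h; rw [h] at hne; simp at hne
      have h2ne : (derivative^[k] P).eval t₂ ≠ 0 := by
        intro h; rw [h, sign_zero] at hsg; exact hne hsg
      have ht1 : t₁ ∈ Icc t₁ t₂ := ⟨le_refl _, hle⟩
      have ht2 : t₂ ∈ Icc t₁ t₂ := ⟨hle, le_refl _⟩
      intro h0
      rcases poly_sign_const _ _ _ hnz with hpos | hneg
      · have hmono := poly_strictMonoOn (derivative^[k] P) t₁ t₂
          (fun s hs => by rw [← hder]; exact hpos s hs)
        have hA : (derivative^[k] P).eval t₁ ≤ 0 := by
          rcases eq_or_lt_of_le ht.1 with h | h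
          · rw [h, h0]
          · exact (le_of_lt (h0 ▸ hmono ht1 ht h))
        have hB : (0:ℝ) ≤ (derivative^[k] P).eval t₂ := by
          rcases eq_or_lt_of_le ht.2 with h | h
          · rw [← h, h0]
          · exact (le_of_lt (h0 ▸ hmono ht ht2 h))
        have hA' : (derivative^[k] P).eval t₁ < 0 := lt_of_le_of_ne hA h1ne
        have hB' : (0:ℝ) < (derivative^[k] P).eval t₂ := lt_of_le_of_ne hB (Ne.symm h2ne)
        rw [sign_neg hA', sign_pos hB'] at hsg
        simp at hsg
      · have hmono := poly_strictAntiOn (derivative^[k] P) t₁ t₂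
          (fun s hs => by rw [← hder]; exact hneg s hs)
        have hA : (0:ℝ) ≤ (derivative^[k] P).eval t₁ := by
          rcases eq_or_lt_of_le ht.1 with h | h
          · rw [h, h0]
          · exact (le_of_lt (h0 ▸ hmono ht1 ht h))
        have hB : (derivative^[k] P).eval t₂ ≤ 0 := by
          rcases eq_or_lt_of_le ht.2 with h | h
          · rw [← h, h0]
          · exact (le_of_lt (h0 ▸ hmono ht ht2 h))
        have hA' : (0:ℝ) < (derivative^[k] P).eval t₁ := lt_of_le_of_ne hA (Ne.symm h1ne)
        have hB' : (derivative^[k] P).eval t₂ < 0 := lt_of_le_of_ne hB h2ne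
        rw [sign_pos hA', sign_neg hB'] at hsg
        simp at hsg
  rcases eq_or_lt_of_le hle with h | h
  · exact h
  exfalso
  obtain ⟨c, hc, hc0⟩ := exists_deriv_eq_zero h
    ((derivative^[q] P).continuousOn) (h₁.trans h₂.symm)
  rw [Polynomial.deriv] at hc0
  have := key (p - (q+1)) (q+1) (by omega) (le_refl _) (le_refl _) c
    ⟨hc.1.le, hc.2.le⟩
  rw [Function.iterate_succ_apply'] at this
  exact this hc0

/-- Semantic content of Proposition `thWITL_eq`: if `t₁, t₂` are both
roots of `P^{(q)}` and the signs of `P^{(k)}(t₁)` and `P^{(k)}(t₂)` agree and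
are nonzero for all `q+1 ≤ k ≤ p-1`, where `P` is monic of degree `p ≥ 1`,
then `t₁ = t₂`. -/
theorem thom_same_encoding_eq (p : ℕ) (hp : 1 ≤ p) (P : Polynomial ℝ)
    (hmon : P.Monic) (hdeg : P.natDegree = p)
    (q : ℕ) (hq : q ≤ p - 1) (t₁ t₂ : ℝ)
    (h₁ : (Polynomial.derivative^[q] P).eval t₁ = 0)
    (h₂ : (Polynomial.derivative^[q] P).eval t₂ = 0)
    (hsame : ∀ k, q + 1 ≤ k → k ≤ p - 1 →
      SignType.sign ((Polynomial.derivative^[k] P).eval t₁) =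
        SignType.sign ((Polynomial.derivative^[k] P).eval t₂) ∧
      SignType.sign ((Polynomial.derivative^[k] P).eval t₁) ≠ 0) :
    t₁ = t₂ := by
  rcases le_total t₁ t₂ with h | h
  · exact aux p hp P hmon hdeg q hq t₁ t₂ h h₁ h₂ hsame
  · refine (aux p hp P hmon hdeg q hq t₂ t₁ h h₂ h₁ fun k hk1 hk2 => ?_).symm
    obtain ⟨hs, hn⟩ := hsame k hk1 hk2
    exact ⟨hs.symm, hs ▸ hn⟩
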